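/- A real n×n matrix A has all eigenvalues in the open unit disk (is asymptotically stable) if and only if A = S⁻¹UBS for some real n×n matrices S, U, B where S is invertible, U is orthogonal, B is symmetric positive semidefinite, and the spectral norm of B is strictly less than 1. -/

import Mathlib

open Matrix
open scoped Matrix.Norms.L2Operator

/-- Spectral norm (largest singular value) of a real square matrix,
as the operator norm of the induced map on Euclidean space. -/
noncomputable def specNorm {ι : Type*} [Fintype ι] [DecidableEq ι]
    (B : Matrix ι ι ℝ) : ℝ :=
  ‖Matrix.toEuclideanCLM (𝕜 := ℝ) B‖

/-- Complexification of a real matrix. -/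
def mC {ι κ : Type*} (M : Matrix ι κ ℝ) : Matrix ι κ ℂ :=
  M.map (fun x => (x : ℂ))

/-- `μ` is a (complex) eigenvalue of the real matrix `M`. -/
def IsEig {ι : Type*} [Fintype ι] [DecidableEq ι]
    (M : Matrix ι ι ℝ) (μ : ℂ) : Prop :=
  (μ • (1 : Matrix ι ι ℂ) - mC M).det = 0

/-- The eigenvalue `μ` of `M` is semisimple (geometric = algebraic multiplicity),
expressed as: the kernel of `(M - μI)²` equals the kernel of `M - μI`. -/
def IsSemisimpleEig {ι : Type*} [Fintype ι] [DecidableEq ι]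
    (M : Matrix ι ι ℝ) (μ : ℂ) : Prop :=
  ∀ v : ι → ℂ, ((mC M - μ • 1) * (mC M - μ • 1)) *ᵥ v = 0 →
    (mC M - μ • 1) *ᵥ v = 0

/-- A real matrix is stable: all eigenvalues in the closed unit disk and
those on the unit circle are semisimple. -/
def IsStable {ι : Type*} [Fintype ι] [DecidableEq ι]
    (M : Matrix ι ι ℝ) : Prop :=
  ∀ μ : ℂ, IsEig M μ →
    ‖μ‖ ≤ 1 ∧ (‖μ‖ = 1 → IsSemisimpleEig M μ)

/-- The pencil polynomial `det(μ E - A)` evaluated at `μ ∈ ℂ`. -/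
noncomputable def pencil {ι : Type*} [Fintype ι] [DecidableEq ι]
    (E A : Matrix ι ι ℝ) (μ : ℂ) : ℂ :=
  (μ • mC E - mC A).det

/-- Squared Frobenius norm. -/
def froSq {ι κ : Type*} [Fintype ι] [Fintype κ] (M : Matrix ι κ ℝ) : ℝ :=
  ∑ i, ∑ j, (M i j) ^ 2

section prelim
variable {n : ℕ}

-- mC as ring hom facts
lemma mC_mul (M N : Matrix (Fin n) (Fin n) ℝ) : mC (M * N) = mC M * mC N := by
  have : (fun x : ℝ => (x:ℂ)) = Complex.ofRealHom := rfl
  simp [mC, this]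

lemma mC_one : mC (1 : Matrix (Fin n) (Fin n) ℝ) = 1 := by
  have : (fun x : ℝ => (x:ℂ)) = Complex.ofRealHom := rfl
  simp [mC, this]

lemma mC_pow (M : Matrix (Fin n) (Fin n) ℝ) (k : ℕ) : mC (M ^ k) = mC M ^ k := by
  induction k with
  | zero => simpa using mC_one
  | succ k ih => rw [pow_succ, pow_succ, mC_mul, ih]

lemma mC_conjTranspose (M : Matrix (Fin n) (Fin n) ℝ) : (mC M)ᴴ = mC Mᵀ := by
  ext i j
  simp [mC, Matrix.conjTranspose_apply, Complex.conj_ofReal]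

lemma mC_det (M : Matrix (Fin n) (Fin n) ℝ) : (mC M).det = (M.det : ℂ) := by
  exact (RingHom.map_det Complex.ofRealHom M).symm

-- real dot products
lemma dot_self_nonneg (x : Fin n → ℝ) : 0 ≤ x ⬝ᵥ x :=
  Finset.sum_nonneg fun i _ => mul_self_nonneg _

lemma dot_self_pos {x : Fin n → ℝ} (hx : x ≠ 0) : 0 < x ⬝ᵥ x := by
  rcases Function.ne_iff.1 hx with ⟨i, hi⟩
  have : (0:ℝ) < x i * x i := mul_self_pos.2 hi
  calc (0:ℝ) < x i * x i := this
    _ ≤ x ⬝ᵥ x := Finset.single_le_sum (f := fun j => x j * x j)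
        (fun j _ => mul_self_nonneg _) (Finset.mem_univ i)

lemma euclid_norm_eq (x : Fin n → ℝ) :
    ‖(WithLp.equiv 2 (Fin n → ℝ)).symm x‖ = Real.sqrt (x ⬝ᵥ x) := by
  rw [EuclideanSpace.norm_eq]
  congr 1
  simp [dotProduct, Real.norm_eq_abs, sq_abs, sq]

lemma toCLM_apply (M : Matrix (Fin n) (Fin n) ℝ) (x : Fin n → ℝ) :
    (Matrix.toEuclideanCLM (𝕜 := ℝ) M) ((WithLp.equiv 2 (Fin n → ℝ)).symm x)
      = (WithLp.equiv 2 (Fin n → ℝ)).symm (M *ᵥ x) := by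
  exact Matrix.toEuclideanCLM_toLp M x

lemma dot_mulVec_le (M : Matrix (Fin n) (Fin n) ℝ) (x : Fin n → ℝ) :
    (M *ᵥ x) ⬝ᵥ (M *ᵥ x) ≤ specNorm M ^ 2 * (x ⬝ᵥ x) := by
  have h := (Matrix.toEuclideanCLM (𝕜 := ℝ) M).le_opNorm
    ((WithLp.equiv 2 (Fin n → ℝ)).symm x)
  rw [toCLM_apply, euclid_norm_eq, euclid_norm_eq] at h
  have h0 : 0 ≤ specNorm M := norm_nonneg _
  have h2 : Real.sqrt ((M *ᵥ x) ⬝ᵥ (M *ᵥ x)) ^ 2 ≤ (specNorm M * Real.sqrt (x ⬝ᵥ x)) ^ 2 := by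
    have := Real.sqrt_nonneg ((M *ᵥ x) ⬝ᵥ (M *ᵥ x))
    exact pow_le_pow_left₀ this h 2
  rw [Real.sq_sqrt (dot_self_nonneg _)] at h2
  calc (M *ᵥ x) ⬝ᵥ (M *ᵥ x) ≤ (specNorm M * Real.sqrt (x ⬝ᵥ x)) ^ 2 := h2
    _ = specNorm M ^ 2 * (x ⬝ᵥ x) := by
        rw [mul_pow, Real.sq_sqrt (dot_self_nonneg _)]

lemma specNorm_le_of_dot {M : Matrix (Fin n) (Fin n) ℝ} {c : ℝ} (hc : 0 ≤ c)
    (h : ∀ x : Fin n → ℝ, (M *ᵥ x) ⬝ᵥ (M *ᵥ x) ≤ c ^ 2 * (x ⬝ᵥ x)) :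
    specNorm M ≤ c := by
  apply ContinuousLinearMap.opNorm_le_bound _ hc
  intro v
  set x := WithLp.equiv 2 (Fin n → ℝ) v with hx
  have hv : (WithLp.equiv 2 (Fin n → ℝ)).symm x = v := by simp [hx]
  rw [← hv, toCLM_apply, euclid_norm_eq, euclid_norm_eq]
  calc Real.sqrt ((M *ᵥ x) ⬝ᵥ (M *ᵥ x)) ≤ Real.sqrt (c ^ 2 * (x ⬝ᵥ x)) :=
        Real.sqrt_le_sqrt (h x)
    _ = c * Real.sqrt (x ⬝ᵥ x) := by
        rw [Real.sqrt_mul (sq_nonneg c), Real.sqrt_sq hc]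

end prelim
section cplx
variable {n : ℕ}

/-- sum of normSq of entries -/
noncomputable def cSq (v : Fin n → ℂ) : ℝ := ∑ i, Complex.normSq (v i)

lemma cSq_nonneg (v : Fin n → ℂ) : 0 ≤ cSq v :=
  Finset.sum_nonneg fun i _ => Complex.normSq_nonneg _

lemma cSq_pos {v : Fin n → ℂ} (hv : v ≠ 0) : 0 < cSq v := by
  rcases Function.ne_iff.1 hv with ⟨i, hi⟩
  calc (0:ℝ) < Complex.normSq (v i) := Complex.normSq_pos.2 hi
    _ ≤ cSq v := Finset.single_le_sum (f := fun j => Complex.normSq (v j))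
        (fun j _ => Complex.normSq_nonneg _) (Finset.mem_univ i)

lemma star_dot_eq_cSq (v : Fin n → ℂ) : star v ⬝ᵥ v = (cSq v : ℂ) := by
  simp only [dotProduct, Pi.star_apply, cSq]
  push_cast
  congr 1
  ext i
  rw [Complex.star_def, mul_comm, Complex.mul_conj]

lemma cSq_smul (μ : ℂ) (v : Fin n → ℂ) : cSq (μ • v) = Complex.normSq μ * cSq v := by
  simp [cSq, Complex.normSq_mul, Finset.mul_sum]

lemma cSq_mulVec_orth {U : Matrix (Fin n) (Fin n) ℝ} (hU : Uᵀ * U = 1)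
    (w : Fin n → ℂ) : cSq (mC U *ᵥ w) = cSq w := by
  have h1 : (cSq (mC U *ᵥ w) : ℂ) = (cSq w : ℂ) := by
    rw [← star_dot_eq_cSq, ← star_dot_eq_cSq, star_mulVec, dotProduct_mulVec,
      vecMul_vecMul]
    rw [mC_conjTranspose, ← mC_mul, hU, mC_one, vecMul_one]
  exact_mod_cast h1

/-- real and imaginary parts of complexified mulVec -/
lemma mC_mulVec_re (B : Matrix (Fin n) (Fin n) ℝ) (v : Fin n → ℂ) (i : Fin n) :
    (mC B *ᵥ v) i = ((B *ᵥ fun j => (v j).re) i : ℝ) + ((B *ᵥ fun j => (v j).im) i : ℝ) * Complex.I := by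
  simp only [mulVec, dotProduct, mC, Matrix.map_apply]
  push_cast
  rw [Finset.sum_mul, ← Finset.sum_add_distrib]
  congr 1
  ext j
  apply Complex.ext <;> simp

lemma cSq_mC_mulVec_le (B : Matrix (Fin n) (Fin n) ℝ) (v : Fin n → ℂ) :
    cSq (mC B *ᵥ v) ≤ specNorm B ^ 2 * cSq v := by
  set vr := fun j => (v j).re
  set vi := fun j => (v j).im
  have h1 : cSq (mC B *ᵥ v) = (B *ᵥ vr) ⬝ᵥ (B *ᵥ vr) + (B *ᵥ vi) ⬝ᵥ (B *ᵥ vi) := by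
    simp only [cSq, dotProduct]
    rw [← Finset.sum_add_distrib]
    congr 1; ext i
    rw [mC_mulVec_re]
    simp [Complex.normSq_apply, sq]; rfl
  have h2 : cSq v = vr ⬝ᵥ vr + vi ⬝ᵥ vi := by
    simp only [cSq, dotProduct, Complex.normSq_apply, ← Finset.sum_add_distrib]; rfl
  rw [h1, h2, mul_add]
  exact add_le_add (dot_mulVec_le B vr) (dot_mulVec_le B vi)

end cplx

theorem backward {n : ℕ} (A S U B : Matrix (Fin n) (Fin n) ℝ)
    (hS : IsUnit S) (hU : Uᵀ * U = 1) (hBn : specNorm B < 1)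
    (hA : A = S⁻¹ * U * B * S) : ∀ μ : ℂ, IsEig A μ → ‖μ‖ < 1 := by
  intro μ hμ
  have hSd : IsUnit S.det := (Matrix.isUnit_iff_isUnit_det S).1 hS
  have hinv : S⁻¹ * S = 1 := Matrix.nonsing_inv_mul S hSd
  set C := U * B with hC
  have hmc : mC A = mC S⁻¹ * mC C * mC S := by
    rw [hA, hC, mC_mul, mC_mul, mC_mul, mul_assoc (mC S⁻¹), ← mC_mul]
  have hfact : μ • (1 : Matrix (Fin n) (Fin n) ℂ) - mC A
      = mC S⁻¹ * (μ • 1 - mC C) * mC S := by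
    rw [mul_sub, sub_mul, hmc]
    congr 1
    rw [mul_smul_comm, smul_mul_assoc, mul_one, ← mC_mul, hinv, mC_one]
  have hdet : (μ • (1 : Matrix (Fin n) (Fin n) ℂ) - mC C).det = 0 := by
    have h1 : (mC (S⁻¹ : Matrix (Fin n) (Fin n) ℝ)).det * (mC S).det = 1 := by
      rw [← Matrix.det_mul, ← mC_mul, hinv, mC_one, Matrix.det_one]
    have h2 := hμ
    unfold IsEig at h2
    rw [hfact, Matrix.det_mul, Matrix.det_mul] at h2
    have : (mC (S⁻¹ : Matrix (Fin n) (Fin n) ℝ)).det *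
        (μ • (1:Matrix (Fin n) (Fin n) ℂ) - mC C).det * (mC S).det
        = (μ • (1:Matrix (Fin n) (Fin n) ℂ) - mC C).det *
          ((mC (S⁻¹ : Matrix (Fin n) (Fin n) ℝ)).det * (mC S).det) := by ring
    rw [this, h1, mul_one] at h2
    exact h2
  obtain ⟨v, hv0, hv⟩ := (Matrix.exists_mulVec_eq_zero_iff).2 hdet
  have hCv : mC C *ᵥ v = μ • v := by
    have := hv
    rw [Matrix.sub_mulVec, Matrix.smul_mulVec, Matrix.one_mulVec, sub_eq_zero] at this
    exact this.symm
  have hcs : Complex.normSq μ * cSq v ≤ specNorm B ^ 2 * cSq v := by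
    calc Complex.normSq μ * cSq v = cSq (μ • v) := (cSq_smul μ v).symm
      _ = cSq (mC C *ᵥ v) := by rw [hCv]
      _ = cSq (mC B *ᵥ v) := by
          rw [hC, mC_mul, ← Matrix.mulVec_mulVec, cSq_mulVec_orth hU]
      _ ≤ specNorm B ^ 2 * cSq v := cSq_mC_mulVec_le B v
  have hcv : 0 < cSq v := cSq_pos hv0
  have hns : Complex.normSq μ ≤ specNorm B ^ 2 := le_of_mul_le_mul_right hcs hcv
  have hsp : (0:ℝ) ≤ specNorm B := norm_nonneg _
  calc ‖μ‖ = Real.sqrt (Complex.normSq μ) := Complex.norm_def μ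
    _ ≤ Real.sqrt (specNorm B ^ 2) := Real.sqrt_le_sqrt hns
    _ = specNorm B := by rw [Real.sqrt_sq hsp]
    _ < 1 := hBn

section gelfand
variable {n : ℕ}

lemma eval_charpoly' (M : Matrix (Fin n) (Fin n) ℂ) (μ : ℂ) :
    (M.charpoly).eval μ = (μ • (1 : Matrix (Fin n) (Fin n) ℂ) - M).det := by
  rw [Matrix.charpoly, ← Polynomial.coe_evalRingHom, RingHom.map_det]
  congr 1
  ext i j
  by_cases h : i = j <;>
    simp [Matrix.charmatrix_apply, Matrix.diagonal_apply, h, Matrix.one_apply,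
      Matrix.smul_apply, Matrix.sub_apply]

lemma spec_eq (A : Matrix (Fin n) (Fin n) ℝ) :
    spectrum ℂ (mC A) = {μ : ℂ | IsEig A μ} := by
  ext μ
  rw [spectrum.mem_iff]
  simp only [Set.mem_setOf_eq, IsEig]
  rw [Algebra.algebraMap_eq_smul_one]
  constructor
  · intro h
    by_contra hd
    exact h ((Matrix.isUnit_iff_isUnit_det _).2 (isUnit_iff_ne_zero.2 hd))
  · intro h hu
    exact (isUnit_iff_ne_zero.1 ((Matrix.isUnit_iff_isUnit_det _).1 hu)) h

end gelfand

section gelfand2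
variable {n : ℕ}
open Filter Topology

lemma eig_finite (A : Matrix (Fin n) (Fin n) ℝ) : {μ : ℂ | IsEig A μ}.Finite := by
  have hsub : {μ : ℂ | IsEig A μ} ⊆ {μ : ℂ | ((mC A).charpoly).IsRoot μ} := by
    intro μ hμ
    simp only [Set.mem_setOf_eq, Polynomial.IsRoot, eval_charpoly']
    exact hμ
  exact Set.Finite.subset ((mC A).charpoly_monic.ne_zero |> Polynomial.finite_setOf_isRoot) hsub

lemma specRadius_lt_one {A : Matrix (Fin n) (Fin n) ℝ}
    (h : ∀ μ : ℂ, IsEig A μ → ‖μ‖ < 1) :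
    spectralRadius ℂ (mC A) < 1 := by
  classical
  have hfin := eig_finite A
  set F := hfin.toFinset with hF
  have hr : F.sup (fun μ => ‖μ‖₊) < 1 := by
    rw [Finset.sup_lt_iff (by norm_num : (⊥ : NNReal) < 1)]
    intro μ hμ
    have : IsEig A μ := by
      have := (Set.Finite.mem_toFinset hfin).1 hμ; exact this
    have habs := h μ this
    rw [← NNReal.coe_lt_coe]
    simpa using habs
  have hsr : spectralRadius ℂ (mC A) ≤ (F.sup (fun μ => ‖μ‖₊) : ENNReal) := by
    rw [spectralRadius]
    apply iSup₂_le
    intro μ hμ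
    have : μ ∈ F := (Set.Finite.mem_toFinset hfin).2 (by rw [← spec_eq]; exact hμ)
    exact_mod_cast ENNReal.coe_le_coe.2 (Finset.le_sup (f := fun μ => ‖μ‖₊) this)
  calc spectralRadius ℂ (mC A) ≤ _ := hsr
    _ < 1 := by exact_mod_cast ENNReal.coe_lt_one_iff.2 hr

lemma exists_pow_norm_lt {A : Matrix (Fin n) (Fin n) ℝ}
    (h : ∀ μ : ℂ, IsEig A μ → ‖μ‖ < 1) :
    ∃ k : ℕ, 1 ≤ k ∧ ‖(mC A) ^ k‖ < 1 := by
  haveI : CompleteSpace (Matrix (Fin n) (Fin n) ℂ) := FiniteDimensional.complete ℂ _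
  have ht := spectrum.pow_nnnorm_pow_one_div_tendsto_nhds_spectralRadius (mC A)
  have hev : ∀ᶠ k : ℕ in atTop, ((‖(mC A) ^ k‖₊ : ENNReal) ^ (1 / (k:ℝ))) < 1 :=
    ht.eventually_lt_const (specRadius_lt_one h)
  obtain ⟨k, hk, hk1⟩ := ((hev.and (eventually_ge_atTop 1)).exists)
  refine ⟨k, hk1, ?_⟩
  by_contra hge
  push_neg at hge
  have h1k : (0:ℝ) ≤ 1 / (k:ℝ) := by positivity
  have : (1 : ENNReal) ≤ ((‖(mC A) ^ k‖₊ : ENNReal) ^ (1 / (k:ℝ))) := by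
    calc (1:ENNReal) = 1 ^ (1/(k:ℝ)) := by rw [ENNReal.one_rpow]
      _ ≤ _ := by
          apply ENNReal.rpow_le_rpow _ h1k
          exact_mod_cast ENNReal.one_le_coe_iff.2 (by exact_mod_cast hge)
  exact absurd hk (not_lt.2 this)

end gelfand2

section realcomplex
variable {n : ℕ}

lemma mC_mulVec_real (M : Matrix (Fin n) (Fin n) ℝ) (y : Fin n → ℝ) :
    mC M *ᵥ (fun i => (y i : ℂ)) = fun i => (((M *ᵥ y) i : ℝ) : ℂ) := by
  ext i
  simp [mulVec, dotProduct, mC]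

lemma cSq_real (y : Fin n → ℝ) : cSq (fun i => (y i : ℂ)) = y ⬝ᵥ y := by
  simp [cSq, dotProduct, Complex.normSq_ofReal, sq]

lemma normC_eq (w : Fin n → ℂ) :
    ‖(WithLp.equiv 2 (Fin n → ℂ)).symm w‖ = Real.sqrt (cSq w) := by
  rw [EuclideanSpace.norm_eq]
  congr 1
  simp [cSq, Complex.sq_norm]

lemma specNorm_le_mC (M : Matrix (Fin n) (Fin n) ℝ) : specNorm M ≤ ‖mC M‖ := by
  apply specNorm_le_of_dot (norm_nonneg _)
  intro y
  set yC := fun i => (y i : ℂ) with hyC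
  have h := Matrix.l2_opNorm_mulVec (mC M) ((WithLp.equiv 2 (Fin n → ℂ)).symm yC)
  have e1 : ‖(EuclideanSpace.equiv (Fin n) ℂ).symm (mC M *ᵥ ((WithLp.equiv 2 (Fin n → ℂ)).symm yC))‖
      = Real.sqrt ((M *ᵥ y) ⬝ᵥ (M *ᵥ y)) := by
    have : mC M *ᵥ ((WithLp.equiv 2 (Fin n → ℂ)).symm yC) = mC M *ᵥ yC := rfl
    rw [show ((EuclideanSpace.equiv (Fin n) ℂ).symm
        (mC M *ᵥ ((WithLp.equiv 2 (Fin n → ℂ)).symm yC)) : EuclideanSpace ℂ (Fin n))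
        = (WithLp.equiv 2 (Fin n → ℂ)).symm (mC M *ᵥ yC) from rfl]
    rw [normC_eq, mC_mulVec_real, cSq_real]
  have e2 : ‖(WithLp.equiv 2 (Fin n → ℂ)).symm yC‖ = Real.sqrt (y ⬝ᵥ y) := by
    rw [normC_eq, cSq_real]
  rw [e1, e2] at h
  have h2 := pow_le_pow_left₀ (Real.sqrt_nonneg _) h 2
  rw [Real.sq_sqrt (dot_self_nonneg _), mul_pow, Real.sq_sqrt (dot_self_nonneg _)] at h2
  exact h2

lemma exists_pow_specNorm_lt {A : Matrix (Fin n) (Fin n) ℝ}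
    (h : ∀ μ : ℂ, IsEig A μ → ‖μ‖ < 1) :
    ∃ k : ℕ, 1 ≤ k ∧ specNorm (A ^ k) < 1 := by
  obtain ⟨k, hk1, hk⟩ := exists_pow_norm_lt h
  exact ⟨k, hk1, lt_of_le_of_lt (by rw [← mC_pow] at hk ⊢; exact specNorm_le_mC _) hk⟩

end realcomplex

section lyapunov
variable {n : ℕ}
open scoped MatrixOrder

lemma dot_sum (v : Fin n → ℝ) (s : Finset ℕ) (w : ℕ → Fin n → ℝ) :
    v ⬝ᵥ (∑ j ∈ s, w j) = ∑ j ∈ s, v ⬝ᵥ w j := by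
  simp only [dotProduct, Finset.sum_apply, Finset.mul_sum]
  rw [Finset.sum_comm]

lemma sum_mulVec' (s : Finset ℕ) (w : ℕ → Matrix (Fin n) (Fin n) ℝ) (x : Fin n → ℝ) :
    (∑ j ∈ s, w j) *ᵥ x = ∑ j ∈ s, (w j *ᵥ x) := by
  ext i
  simp only [Matrix.mulVec, dotProduct, Finset.sum_apply, Matrix.sum_apply, Finset.sum_mul]
  rw [Finset.sum_comm]

lemma dot_transpose_mul (M : Matrix (Fin n) (Fin n) ℝ) (x : Fin n → ℝ) :
    x ⬝ᵥ ((Mᵀ * M) *ᵥ x) = (M *ᵥ x) ⬝ᵥ (M *ᵥ x) := by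
  rw [← Matrix.mulVec_mulVec, Matrix.dotProduct_mulVec, Matrix.vecMul_transpose]

lemma exists_contraction {A : Matrix (Fin n) (Fin n) ℝ}
    (h : ∀ μ : ℂ, IsEig A μ → ‖μ‖ < 1) :
    ∃ Sm : Matrix (Fin n) (Fin n) ℝ, IsUnit Sm ∧ specNorm (Sm * A * Sm⁻¹) < 1 := by
  classical
  obtain ⟨k, hk1, hkA⟩ := exists_pow_specNorm_lt h
  set c := specNorm (A ^ k) with hc
  have hc0 : 0 ≤ c := norm_nonneg _
  set t := max c (1/2 : ℝ) with hts
  have ht0 : (0:ℝ) < t := lt_max_of_lt_right (by norm_num)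
  have ht1 : t < 1 := max_lt hkA (by norm_num)
  have hkR : (0:ℝ) < (k:ℝ) := by exact_mod_cast hk1
  set θ := t ^ ((1:ℝ)/(k:ℝ)) with hθdef
  have hθ0 : (0:ℝ) < θ := Real.rpow_pos_of_pos ht0 _
  have hθ1 : θ < 1 := Real.rpow_lt_one ht0.le ht1 (by positivity)
  have hθk : θ ^ k = t := by
    rw [hθdef, ← Real.rpow_natCast (t ^ ((1:ℝ)/(k:ℝ))) k, ← Real.rpow_mul ht0.le]
    rw [one_div_mul_cancel (ne_of_gt hkR), Real.rpow_one]
  have hAk : ∀ x : Fin n → ℝ,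
      (A ^ k *ᵥ x) ⬝ᵥ (A ^ k *ᵥ x) ≤ (θ ^ k) ^ 2 * (x ⬝ᵥ x) := by
    intro x
    calc (A ^ k *ᵥ x) ⬝ᵥ (A ^ k *ᵥ x) ≤ c ^ 2 * (x ⬝ᵥ x) := dot_mulVec_le _ x
      _ ≤ (θ ^ k) ^ 2 * (x ⬝ᵥ x) := by
          rw [hθk]
          exact mul_le_mul_of_nonneg_right
            (pow_le_pow_left₀ hc0 (le_max_left _ _) 2) (dot_self_nonneg x)
  set N : ℕ → Matrix (Fin n) (Fin n) ℝ := fun j => (θ⁻¹) ^ j • A ^ j with hN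
  set P : Matrix (Fin n) (Fin n) ℝ := ∑ j ∈ Finset.range k, (N j)ᵀ * N j with hP
  set cjf : ℕ → ℝ := fun j => ((θ⁻¹) ^ j) ^ 2 with hcjf
  have hcj0 : ∀ j, 0 ≤ cjf j := fun j => sq_nonneg _
  -- quadratic form expansion
  have hq : ∀ x : Fin n → ℝ, x ⬝ᵥ (P *ᵥ x)
      = ∑ j ∈ Finset.range k, cjf j * ((A ^ j *ᵥ x) ⬝ᵥ (A ^ j *ᵥ x)) := by
    intro x
    rw [hP, sum_mulVec', dot_sum]
    apply Finset.sum_congr rfl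
    intro j _
    rw [dot_transpose_mul, hN]
    simp only [Matrix.smul_mulVec, smul_dotProduct, dotProduct_smul,
      smul_eq_mul, hcjf]
    ring
  -- positive definiteness
  have hxP : ∀ x : Fin n → ℝ, x ≠ 0 → 0 < x ⬝ᵥ (P *ᵥ x) := by
    intro x hx
    rw [hq]
    have h0mem : 0 ∈ Finset.range k := Finset.mem_range.2 hk1
    have hterm : cjf 0 * ((A ^ 0 *ᵥ x) ⬝ᵥ (A ^ 0 *ᵥ x)) = x ⬝ᵥ x := by
      simp [hcjf, Matrix.one_mulVec]
    calc (0:ℝ) < x ⬝ᵥ x := dot_self_pos hx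
      _ = cjf 0 * ((A ^ 0 *ᵥ x) ⬝ᵥ (A ^ 0 *ᵥ x)) := hterm.symm
      _ ≤ _ := Finset.single_le_sum
          (f := fun j => cjf j * ((A ^ j *ᵥ x) ⬝ᵥ (A ^ j *ᵥ x)))
          (fun j _ => mul_nonneg (hcj0 j) (dot_self_nonneg _)) h0mem
  have hPD : P.PosDef := by
    refine Matrix.PosDef.of_dotProduct_mulVec_pos ?_ ?_
    · show Pᴴ = P
      rw [hP, Matrix.conjTranspose_sum]
      apply Finset.sum_congr rfl
      intro j _
      rw [Matrix.conjTranspose_eq_transpose_of_trivial, Matrix.transpose_mul,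
        Matrix.transpose_transpose]
    · intro x hx
      have : star x = x := by funext i; simp
      rw [this]
      exact hxP x hx
  have hPsd : P.PosSemidef := hPD.posSemidef
  set Sm := CFC.sqrt P with hSm
  have hSmPsd : Sm.PosSemidef := (CFC.sqrt_nonneg P).posSemidef
  have hSmT : Smᵀ = Sm := by
    have := hSmPsd.isHermitian
    rwa [Matrix.IsHermitian, Matrix.conjTranspose_eq_transpose_of_trivial] at this
  have hSS : Sm * Sm = P := CFC.sqrt_mul_sqrt_self P hPsd.nonneg
  have hdSm : Sm.det ≠ 0 := by
    intro h0
    have := hPD.det_pos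
    rw [← hSS, Matrix.det_mul, h0, mul_zero] at this
    exact lt_irrefl _ this
  have hSmU : IsUnit Sm := (Matrix.isUnit_iff_isUnit_det _).2 (isUnit_iff_ne_zero.2 hdSm)
  refine ⟨Sm, hSmU, ?_⟩
  -- Lyapunov inequality : q (A x) ≤ θ² q x
  have hLy : ∀ x : Fin n → ℝ,
      (A *ᵥ x) ⬝ᵥ (P *ᵥ (A *ᵥ x)) ≤ θ ^ 2 * (x ⬝ᵥ (P *ᵥ x)) := by
    intro x
    set u : ℕ → ℝ := fun j => (A ^ j *ᵥ x) ⬝ᵥ (A ^ j *ᵥ x) with hu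
    have hu0 : ∀ j, 0 ≤ u j := fun j => dot_self_nonneg _
    set g : ℕ → ℝ := fun j => cjf j * u j with hg
    have hg0 : ∀ j, 0 ≤ g j := fun j => mul_nonneg (hcj0 j) (hu0 j)
    have hqx : x ⬝ᵥ (P *ᵥ x) = ∑ j ∈ Finset.range k, g j := hq x
    have hqAx : (A *ᵥ x) ⬝ᵥ (P *ᵥ (A *ᵥ x)) = θ ^ 2 * (∑ j ∈ Finset.range k, g (j+1)) := by
      rw [hq (A *ᵥ x), Finset.mul_sum]
      apply Finset.sum_congr rfl
      intro j _
      have hAj : A ^ j *ᵥ (A *ᵥ x) = A ^ (j+1) *ᵥ x := by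
        rw [Matrix.mulVec_mulVec, ← pow_succ]
      rw [hAj]
      show cjf j * u (j+1) = θ ^ 2 * (cjf (j+1) * u (j+1))
      have : cjf j = θ ^ 2 * cjf (j+1) := by
        simp only [hcjf, pow_succ]
        field_simp
      rw [this]; ring
    have hsum : ∑ j ∈ Finset.range k, g (j+1)
        = (∑ j ∈ Finset.range k, g j) + g k - g 0 := by
      have h1 : ∑ j ∈ Finset.range (k+1), g j
          = (∑ j ∈ Finset.range k, g (j+1)) + g 0 := Finset.sum_range_succ' g k
      have h2 : ∑ j ∈ Finset.range (k+1), g j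
          = (∑ j ∈ Finset.range k, g j) + g k := Finset.sum_range_succ g k
      linarith
    have hgk : g k ≤ g 0 := by
      have h1 : u k ≤ (θ ^ k) ^ 2 * u 0 := by
        have := hAk x
        simpa [hu, Matrix.one_mulVec] using this
      have h2 : g k ≤ cjf k * ((θ ^ k) ^ 2 * u 0) :=
        mul_le_mul_of_nonneg_left h1 (hcj0 k)
      have h3 : cjf k * ((θ ^ k) ^ 2 * u 0) = u 0 := by
        have : cjf k * (θ ^ k) ^ 2 = 1 := by
          simp only [hcjf]
          rw [← mul_pow, ← mul_pow, inv_mul_cancel₀ (ne_of_gt hθ0)]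
          norm_num
        rw [← mul_assoc, this, one_mul]
      have h4 : g 0 = u 0 := by simp [hg, hcjf]
      rw [h4]
      exact h2.trans (le_of_eq h3)
    rw [hqAx, hqx, hsum]
    nlinarith [sq_nonneg θ, hg0 0, hg0 k]
  -- contraction bound
  have hcontr : specNorm (Sm * A * Sm⁻¹) ≤ θ := by
    apply specNorm_le_of_dot hθ0.le
    intro x
    set y := Sm⁻¹ *ᵥ x with hy
    have hMx : (Sm * A * Sm⁻¹) *ᵥ x = Sm *ᵥ (A *ᵥ y) := by
      rw [hy, Matrix.mulVec_mulVec, Matrix.mulVec_mulVec, Matrix.mul_assoc]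
    have hSdot : ∀ w : Fin n → ℝ, (Sm *ᵥ w) ⬝ᵥ (Sm *ᵥ w) = w ⬝ᵥ (P *ᵥ w) := by
      intro w
      rw [← dot_transpose_mul, hSmT, hSS]
    have hSy : Sm *ᵥ y = x := by
      rw [hy, Matrix.mulVec_mulVec, Matrix.mul_nonsing_inv Sm (isUnit_iff_ne_zero.2 hdSm),
        Matrix.one_mulVec]
    calc ((Sm * A * Sm⁻¹) *ᵥ x) ⬝ᵥ ((Sm * A * Sm⁻¹) *ᵥ x)
        = (A *ᵥ y) ⬝ᵥ (P *ᵥ (A *ᵥ y)) := by rw [hMx, hSdot]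
      _ ≤ θ ^ 2 * (y ⬝ᵥ (P *ᵥ y)) := hLy y
      _ = θ ^ 2 * ((Sm *ᵥ y) ⬝ᵥ (Sm *ᵥ y)) := by rw [hSdot]
      _ = θ ^ 2 * (x ⬝ᵥ x) := by rw [hSy]
  exact lt_of_le_of_lt hcontr hθ1

end lyapunov

section polar
variable {n : ℕ}
open scoped MatrixOrder

lemma polar_decomp (M : Matrix (Fin n) (Fin n) ℝ) :
    ∃ U B : Matrix (Fin n) (Fin n) ℝ,
      Uᵀ * U = 1 ∧ B.PosSemidef ∧ specNorm B ≤ specNorm M ∧ U * B = M := by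
  classical
  have hMM : (Mᵀ * M).PosSemidef := by
    have := Matrix.posSemidef_conjTranspose_mul_self M
    rwa [Matrix.conjTranspose_eq_transpose_of_trivial] at this
  set B := CFC.sqrt (Mᵀ * M) with hBdef
  have hB : B.PosSemidef := (CFC.sqrt_nonneg (Mᵀ * M)).posSemidef
  have hBT : Bᵀ = B := by
    have := hB.isHermitian
    rwa [Matrix.IsHermitian, Matrix.conjTranspose_eq_transpose_of_trivial] at this
  have hBB : B * B = Mᵀ * M := CFC.sqrt_mul_sqrt_self (Mᵀ * M) hMM.nonneg
  have hdot : ∀ x : Fin n → ℝ, (B *ᵥ x) ⬝ᵥ (B *ᵥ x) = (M *ᵥ x) ⬝ᵥ (M *ᵥ x) := by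
    intro x
    rw [← dot_transpose_mul, ← dot_transpose_mul, hBT, hBB]
  have hBle : specNorm B ≤ specNorm M := by
    apply specNorm_le_of_dot (norm_nonneg _)
    intro x
    rw [hdot]
    exact dot_mulVec_le M x
  -- linear maps on Euclidean space
  set g : EuclideanSpace ℝ (Fin n) →ₗ[ℝ] EuclideanSpace ℝ (Fin n) :=
    Matrix.toEuclideanLin B with hg
  set f : EuclideanSpace ℝ (Fin n) →ₗ[ℝ] EuclideanSpace ℝ (Fin n) :=
    Matrix.toEuclideanLin M with hf
  have happly : ∀ (X : Matrix (Fin n) (Fin n) ℝ) (x : Fin n → ℝ),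
      Matrix.toEuclideanLin X ((WithLp.equiv 2 (Fin n → ℝ)).symm x)
        = (WithLp.equiv 2 (Fin n → ℝ)).symm (X *ᵥ x) := fun X x =>
    Matrix.toEuclideanLin_apply_piLp_toLp X x
  have hnorm : ∀ v : EuclideanSpace ℝ (Fin n), ‖g v‖ = ‖f v‖ := by
    intro v
    set x := WithLp.equiv 2 (Fin n → ℝ) v with hx
    have hv : (WithLp.equiv 2 (Fin n → ℝ)).symm x = v := by simp [hx]
    rw [← hv, hg, hf, happly, happly, euclid_norm_eq, euclid_norm_eq, hdot]
  have hker : LinearMap.ker g ≤ LinearMap.ker f := by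
    intro v hv
    rw [LinearMap.mem_ker] at hv ⊢
    have := hnorm v
    rw [hv, norm_zero] at this
    exact norm_eq_zero.1 this.symm
  set L0 : (EuclideanSpace ℝ (Fin n) ⧸ LinearMap.ker g) →ₗ[ℝ] EuclideanSpace ℝ (Fin n) :=
    (LinearMap.ker g).liftQ f hker with hL0
  set Eqv := LinearMap.quotKerEquivRange g with hEqv
  set Lmap : LinearMap.range g →ₗ[ℝ] EuclideanSpace ℝ (Fin n) :=
    L0 ∘ₗ (Eqv.symm : LinearMap.range g ≃ₗ[ℝ] _).toLinearMap with hLmap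
  have hLap : ∀ x : EuclideanSpace ℝ (Fin n),
      Lmap ⟨g x, LinearMap.mem_range_self g x⟩ = f x := by
    intro x
    have h1 : Eqv (Submodule.Quotient.mk x) = ⟨g x, LinearMap.mem_range_self g x⟩ :=
      Subtype.ext (LinearMap.quotKerEquivRange_apply_mk g x)
    have h2 : Eqv.symm ⟨g x, LinearMap.mem_range_self g x⟩ = Submodule.Quotient.mk x := by
      rw [← h1, LinearEquiv.symm_apply_apply]
    simp only [hLmap, LinearMap.comp_apply, LinearEquiv.coe_coe, h2, hL0,
      Submodule.liftQ_apply]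
  have hLnorm : ∀ s : LinearMap.range g, ‖Lmap s‖ = ‖s‖ := by
    rintro ⟨v, hv⟩
    obtain ⟨x, rfl⟩ := LinearMap.mem_range.1 hv
    rw [hLap x]
    have : ‖(⟨g x, LinearMap.mem_range_self g x⟩ : LinearMap.range g)‖ = ‖g x‖ := rfl
    rw [this, hnorm]
  set L : LinearMap.range g →ₗᵢ[ℝ] EuclideanSpace ℝ (Fin n) := ⟨Lmap, hLnorm⟩ with hL
  set Uiso := L.extend with hUiso
  have hUg : ∀ x : EuclideanSpace ℝ (Fin n), Uiso (g x) = f x := by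
    intro x
    have h1 : Uiso (↑(⟨g x, LinearMap.mem_range_self g x⟩ : LinearMap.range g)) =
        L ⟨g x, LinearMap.mem_range_self g x⟩ :=
      L.extend_apply ⟨g x, LinearMap.mem_range_self g x⟩
    exact h1.trans (hLap x)
  set U : Matrix (Fin n) (Fin n) ℝ := Matrix.toEuclideanLin.symm Uiso.toLinearMap with hUdef
  have hU : Matrix.toEuclideanLin U = Uiso.toLinearMap := by
    rw [hUdef, LinearEquiv.apply_symm_apply]
  have hmul : ∀ X Y : Matrix (Fin n) (Fin n) ℝ,
      Matrix.toEuclideanLin (X * Y)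
        = (Matrix.toEuclideanLin X).comp (Matrix.toEuclideanLin Y) := by
    intro X Y
    rw [Matrix.toEuclideanLin_eq_toLin]
    exact Matrix.toLin_mul _ _ _ X Y
  have hUB : U * B = M := by
    apply Matrix.toEuclideanLin.injective
    rw [hmul, hU, ← hf, ← hg]
    refine LinearMap.ext fun x => ?_
    exact hUg x
  have hUapp : ∀ x : Fin n → ℝ,
      Uiso ((WithLp.equiv 2 (Fin n → ℝ)).symm x)
        = (WithLp.equiv 2 (Fin n → ℝ)).symm (U *ᵥ x) := by
    intro x
    rw [← happly, hU]
    rfl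
  have hUU : Uᵀ * U = 1 := by
    ext i j
    have hinner := Uiso.inner_map_map
      ((WithLp.equiv 2 (Fin n → ℝ)).symm (Pi.single i 1))
      ((WithLp.equiv 2 (Fin n → ℝ)).symm (Pi.single j 1))
    rw [hUapp, hUapp] at hinner
    have hl : (inner ℝ ((WithLp.equiv 2 (Fin n → ℝ)).symm (U *ᵥ Pi.single i 1))
        ((WithLp.equiv 2 (Fin n → ℝ)).symm (U *ᵥ Pi.single j 1)) : ℝ)
        = ∑ l, U l i * U l j := by
      rw [PiLp.inner_apply]
      apply Finset.sum_congr rfl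
      intro l _
      simp [Matrix.mulVec_single, WithLp.equiv_symm_apply, PiLp.toLp_apply, mul_comm]
    have hr : (inner ℝ ((WithLp.equiv 2 (Fin n → ℝ)).symm (Pi.single i 1) : EuclideanSpace ℝ (Fin n))
        ((WithLp.equiv 2 (Fin n → ℝ)).symm (Pi.single j 1)) : ℝ)
        = if i = j then 1 else 0 := by
      rw [PiLp.inner_apply]
      simp [WithLp.equiv_symm_apply, PiLp.toLp_apply, Pi.single_apply, eq_comm]
    rw [hl, hr] at hinner
    rw [Matrix.mul_apply, Matrix.one_apply]
    simpa [Matrix.transpose_apply] using hinner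
  exact ⟨U, B, hUU, hB, hBle, hUB⟩

end polar

/-- SUB characterization of asymptotically stable matrices. -/
theorem stmt1 {n : ℕ} (A : Matrix (Fin n) (Fin n) ℝ) :
    (∀ μ : ℂ, IsEig A μ → ‖μ‖ < 1) ↔
      ∃ S U B : Matrix (Fin n) (Fin n) ℝ,
        IsUnit S ∧ Uᵀ * U = 1 ∧ B.PosSemidef ∧ specNorm B < 1 ∧
        A = S⁻¹ * U * B * S := by
  constructor
  · intro h
    obtain ⟨Sm, hSmU, hcontr⟩ := exists_contraction h
    obtain ⟨U, B, hUU, hB, hBle, hUB⟩ := polar_decomp (Sm * A * Sm⁻¹)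
    have hSd : IsUnit Sm.det := (Matrix.isUnit_iff_isUnit_det Sm).1 hSmU
    have hinv : Sm⁻¹ * Sm = 1 := Matrix.nonsing_inv_mul Sm hSd
    refine ⟨Sm, U, B, hSmU, hUU, hB, lt_of_le_of_lt hBle hcontr, ?_⟩
    calc A = 1 * A * 1 := by rw [one_mul, mul_one]
      _ = (Sm⁻¹ * Sm) * A * (Sm⁻¹ * Sm) := by rw [hinv]
      _ = Sm⁻¹ * (Sm * A * Sm⁻¹) * Sm := by
          simp only [Matrix.mul_assoc]
      _ = Sm⁻¹ * (U * B) * Sm := by rw [hUB]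
      _ = Sm⁻¹ * U * B * Sm := by simp only [Matrix.mul_assoc]
  · rintro ⟨S, U, B, hS, hU, _hB, hBn, hA⟩
    exact backward A S U B hS hU hBn hA
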